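/- Let (X, μ, f) be an ergodic measure-preserving system, and let φ₁, …, φ_m ∈ L²(μ) be orthonormal in L²(μ). Then for every η₀ > 0 and ε ∈ (0,1) there exist n₀ > 0 and a set G ⊂ X with μ(G) > 1 − ε such that for all x₀ ∈ G and all n > n₀, the n×m matrix Θ with entries Θ_{k,i} = φ_i(f^{k−1}(x₀))/√n satisfies |⟨u_i, u_j⟩ − δ_{ij}| ≤ η₀ for all i ≠ j (where u_i are the columns of Θ); in particular the coherence of Θ is at most η₀ after column normalization. -/

import Mathlib

open MeasureTheory BigOperators Filter Topology

section Aux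

variable {X : Type*} [MeasurableSpace X]

private lemma integrable_of_bdd {μ : Measure X} [IsFiniteMeasure μ] {h : X → ℝ}
    (hm : Measurable h) {C : ℝ} (hC : ∀ x, |h x| ≤ C) : Integrable h μ :=
  ⟨hm.aestronglyMeasurable,
    HasFiniteIntegral.of_bounded (C := C)
      (Filter.Eventually.of_forall (by simpa [Real.norm_eq_abs] using hC))⟩

/-- The running maximum `max_{0 ≤ n ≤ N} S_n` of Birkhoff sums. -/
private noncomputable def Mx (f : X → X) (h : X → ℝ) : ℕ → X → ℝ
  | 0 => fun _ => 0
  | (N + 1) => fun x => max (Mx f h N x) (birkhoffSum f h (N + 1) x)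

private lemma Mx_nonneg (f : X → X) (h : X → ℝ) : ∀ N x, 0 ≤ Mx f h N x := by
  intro N x
  induction N with
  | zero => simp [Mx]
  | succ N ih => exact le_trans ih (le_max_left _ _)

private lemma Mx_ge (f : X → X) (h : X → ℝ) :
    ∀ N n x, n ≤ N → birkhoffSum f h n x ≤ Mx f h N x := by
  intro N
  induction N with
  | zero =>
    intro n x hn
    interval_cases n
    simp [Mx, birkhoffSum_zero]
  | succ N ih =>
    intro n x hn
    rcases Nat.lt_succ_iff_lt_or_eq.mp (Nat.lt_succ_of_le hn) with h' | rfl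
    · exact le_trans (ih n x (Nat.lt_succ_iff.mp h')) (le_max_left _ _)
    · exact le_max_right _ _

private lemma Mx_cases (f : X → X) (h : X → ℝ) :
    ∀ N x, Mx f h N x = 0 ∨ ∃ n, 1 ≤ n ∧ n ≤ N ∧ Mx f h N x = birkhoffSum f h n x := by
  intro N x
  induction N with
  | zero => left; rfl
  | succ N ih =>
    have hMs : Mx f h (N + 1) x = max (Mx f h N x) (birkhoffSum f h (N + 1) x) := rfl
    rcases max_cases (Mx f h N x) (birkhoffSum f h (N + 1) x) with ⟨heq, _⟩ | ⟨heq, _⟩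
    · rw [hMs, heq]
      rcases ih with h0 | ⟨n, h1, h2, h3⟩
      · left; exact h0
      · right; exact ⟨n, h1, h2.trans (Nat.le_succ N), h3⟩
    · right; exact ⟨N + 1, Nat.succ_le_succ (Nat.zero_le N), le_refl _, by rw [hMs, heq]⟩

private lemma Mx_meas {f : X → X} {h : X → ℝ} (hfm : Measurable f) (hm : Measurable h) (N : ℕ) :
    Measurable (Mx f h N) := by
  induction N with
  | zero => exact measurable_const
  | succ N ih =>
    exact ih.max (Finset.measurable_sum _ fun k _ => hm.comp (hfm.iterate k))

private lemma Mx_mono (f : X → X) (h : X → ℝ) : ∀ x, Monotone (fun N => Mx f h N x) := by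
  intro x
  apply monotone_nat_of_le_succ
  intro N
  exact le_max_left _ _

/-- Garsia's maximal ergodic lemma, in the form we need: if a.e. point has some
positive Birkhoff sum, then the integral is nonnegative. -/
private lemma maximal_erg (μ : Measure X) [IsProbabilityMeasure μ] (f : X → X)
    (hf : MeasurePreserving f μ μ) (h : X → ℝ) (hm : Measurable h)
    (C : ℝ) (hC : ∀ x, |h x| ≤ C)
    (hfull : ∀ᵐ x ∂μ, ∃ n : ℕ, 0 < birkhoffSum f h (n + 1) x) :
    0 ≤ ∫ x, h x ∂μ := by
  have hint : Integrable h μ := integrable_of_bdd hm hC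
  have hSint : ∀ n, Integrable (birkhoffSum f h n) μ := by
    intro n
    apply integrable_finset_sum
    intro k _
    exact ((hf.iterate k).integrable_comp hm.aestronglyMeasurable).mpr hint
  have hMint : ∀ N, Integrable (Mx f h N) μ := by
    intro N
    induction N with
    | zero => simpa [Mx] using integrable_const (0 : ℝ)
    | succ N ih => exact ih.sup (hSint (N + 1))
  set E : ℕ → Set X := fun N => {x | 0 < Mx f h N x} with hE
  have hEmeas : ∀ N, MeasurableSet (E N) :=
    fun N => measurableSet_lt measurable_const (Mx_meas hf.measurable hm N)
  -- key step: for each N, the set integral over E N is nonnegative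
  have step1 : ∀ N, 0 ≤ ∫ x in E N, h x ∂μ := by
    intro N
    have key : ∀ x, Mx f h N x - Mx f h N (f x) ≤ (E N).indicator h x := by
      intro x
      by_cases hx : x ∈ E N
      · rw [Set.indicator_of_mem hx]
        rcases Mx_cases f h N x with h0 | ⟨n, h1, h2, h3⟩
        · exact absurd h0 (ne_of_gt hx)
        · obtain ⟨m, rfl⟩ := Nat.exists_eq_add_of_le h1
          rw [h3, add_comm 1 m, birkhoffSum_succ' f h m x]
          have : birkhoffSum f h m (f x) ≤ Mx f h N (f x) :=
            Mx_ge f h N m (f x) (le_trans (Nat.le_succ m) (by omega))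
          linarith
      · rw [Set.indicator_of_notMem hx]
        have h0 : Mx f h N x = 0 := le_antisymm (not_lt.mp hx) (Mx_nonneg f h N x)
        have := Mx_nonneg f h N (f x)
        linarith
    have hind : Integrable ((E N).indicator h) μ := hint.indicator (hEmeas N)
    have hMf : Integrable (fun x => Mx f h N (f x)) μ :=
      (hf.integrable_comp (Mx_meas hf.measurable hm N).aestronglyMeasurable).mpr (hMint N)
    have hmono : ∫ x, (Mx f h N x - Mx f h N (f x)) ∂μ ≤ ∫ x, (E N).indicator h x ∂μ :=
      integral_mono ((hMint N).sub hMf) hind key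
    rw [integral_sub (hMint N) hMf] at hmono
    have heqi : ∫ x, Mx f h N (f x) ∂μ = ∫ x, Mx f h N x ∂μ := by
      rw [← integral_map hf.measurable.aemeasurable
        (by rw [hf.map_eq]; exact (Mx_meas hf.measurable hm N).aestronglyMeasurable), hf.map_eq]
    rw [heqi, sub_self] at hmono
    rwa [integral_indicator (hEmeas N)] at hmono
  -- pass to the limit
  have hmonoE : Monotone E := by
    intro N M hNM x hx
    exact lt_of_lt_of_le hx (Mx_mono f h x hNM)
  have htend : Tendsto (fun N => ∫ x in E N, h x ∂μ) atTop (𝓝 (∫ x in ⋃ N, E N, h x ∂μ)) :=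
    tendsto_setIntegral_of_monotone hEmeas hmonoE hint.integrableOn
  have hunion : μ.restrict (⋃ N, E N) = μ := by
    apply Measure.restrict_eq_self_of_ae_mem
    filter_upwards [hfull] with x hx
    obtain ⟨n, hn⟩ := hx
    exact Set.mem_iUnion.mpr ⟨n + 1, lt_of_lt_of_le hn (Mx_ge f h (n + 1) (n + 1) x le_rfl)⟩
  rw [hunion] at htend
  exact ge_of_tendsto' htend step1

private lemma birkhoffSum_sub_const (f : X → X) (g : X → ℝ) (d : ℝ) (n : ℕ) (x : X) :
    birkhoffSum f (fun y => g y - d) n x = birkhoffSum f g n x - n * d := by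
  simp [birkhoffSum, Finset.sum_sub_distrib, Finset.sum_const, nsmul_eq_mul]

/-- The set where Birkhoff averages frequently exceed the mean by `η` is null. -/
private lemma freq_null (μ : Measure X) [IsProbabilityMeasure μ] (f : X → X)
    (hf : Ergodic f μ) (g : X → ℝ) (hm : Measurable g)
    (C : ℝ) (hC : ∀ x, |g x| ≤ C) (η : ℝ) (hη : 0 < η) :
    μ {x | ∀ N : ℕ, ∃ n, N ≤ n ∧ (∫ y, g y ∂μ) + η < birkhoffSum f g n x / n} = 0 := by
  set c : ℝ := ∫ y, g y ∂μ with hc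
  -- the invariant set
  set A : Set X :=
    {x | ∃ q : ℚ, c + η / 2 < (q : ℝ) ∧ ∀ N : ℕ, ∃ n, N ≤ n ∧ (q : ℝ) < birkhoffSum f g n x / n}
    with hA
  -- pointwise comparison of averages at x and f x
  have hdiff : ∀ x n, |birkhoffSum f g n (f x) / n - birkhoffSum f g n x / n| ≤ 2 * C / n := by
    intro x n
    rcases Nat.eq_zero_or_pos n with rfl | hn
    · simp [birkhoffSum_zero]
    · have h1 := birkhoffSum_succ f g n x
      have h2 := birkhoffSum_succ' f g n x
      have key : birkhoffSum f g n (f x) - birkhoffSum f g n x = g (f^[n] x) - g x := by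
        linarith
      rw [div_sub_div_same, key, abs_div, Nat.abs_cast]
      apply div_le_div_of_nonneg_right ?_ (Nat.cast_nonneg n)
      calc |g (f^[n] x) - g x| ≤ |g (f^[n] x)| + |g x| := abs_sub _ _
        _ ≤ C + C := add_le_add (hC _) (hC _)
        _ = 2 * C := by ring
  -- helper transferring the "frequently large" property along the bound
  have transfer : ∀ (u v : ℕ → ℝ), (∀ n, |u n - v n| ≤ 2 * C / n) →
      (∃ q : ℚ, c + η / 2 < (q : ℝ) ∧ ∀ N : ℕ, ∃ n, N ≤ n ∧ (q : ℝ) < u n) →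
      (∃ q : ℚ, c + η / 2 < (q : ℝ) ∧ ∀ N : ℕ, ∃ n, N ≤ n ∧ (q : ℝ) < v n) := by
    intro u v hb ⟨q, hq, hfreq⟩
    obtain ⟨q', hq'1, hq'2⟩ := exists_rat_btwn hq
    refine ⟨q', hq'1, fun N => ?_⟩
    have htend : Tendsto (fun n : ℕ => 2 * C / n) atTop (𝓝 0) :=
      tendsto_const_div_atTop_nhds_zero_nat (2 * C)
    have hev : ∀ᶠ n : ℕ in atTop, 2 * C / n < (q : ℝ) - (q' : ℝ) := by
      have : (0 : ℝ) < (q : ℝ) - (q' : ℝ) := by linarith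
      exact htend.eventually (eventually_lt_nhds this) |>.mono (fun n hn => hn)
    obtain ⟨N', hN'⟩ := eventually_atTop.mp hev
    obtain ⟨n, hn1, hn2⟩ := hfreq (max N N')
    refine ⟨n, le_trans (le_max_left _ _) hn1, ?_⟩
    have hb' := hb n
    have := hN' n (le_trans (le_max_right _ _) hn1)
    have habs := abs_le.mp hb'
    linarith [habs.1, habs.2]
  -- A is invariant
  have hAinv : f ⁻¹' A = A := by
    ext x
    constructor
    · intro hx
      exact transfer (fun n => birkhoffSum f g n (f x) / n) (fun n => birkhoffSum f g n x / n)
        (hdiff x) hx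
    · intro hx
      refine transfer (fun n => birkhoffSum f g n x / n) (fun n => birkhoffSum f g n (f x) / n)
        (fun n => ?_) hx
      rw [abs_sub_comm]; exact hdiff x n
  -- A is measurable
  have hAmeas : MeasurableSet A := by
    have : A = ⋃ (q : ℚ) (_ : c + η / 2 < (q : ℝ)), ⋂ (N : ℕ), ⋃ (n : ℕ) (_ : N ≤ n),
        {x | (q : ℝ) < birkhoffSum f g n x / n} := by
      ext x
      simp only [Set.mem_setOf_eq, Set.mem_iUnion, Set.mem_iInter]
      constructor
      · rintro ⟨q, hq, hfr⟩; exact ⟨q, hq, fun N => by obtain ⟨n, h1, h2⟩ := hfr N; exact ⟨n, h1, h2⟩⟩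
      · rintro ⟨q, hq, hfr⟩; exact ⟨q, hq, fun N => by obtain ⟨n, h1, h2⟩ := hfr N; exact ⟨n, h1, h2⟩⟩
    rw [this]
    apply MeasurableSet.iUnion; intro q
    apply MeasurableSet.iUnion; intro _
    apply MeasurableSet.iInter; intro N
    apply MeasurableSet.iUnion; intro n
    apply MeasurableSet.iUnion; intro _
    exact measurableSet_lt measurable_const
      ((Finset.measurable_sum _ fun k _ => hm.comp (hf.measurable.iterate k)).div_const _)
  -- ergodicity: μ A = 0 or μ Aᶜ = 0
  rcases hf.toPreErgodic.measure_self_or_compl_eq_zero hAmeas hAinv with hA0 | hAc0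
  · -- target set is contained in A
    apply measure_mono_null ?_ hA0
    intro x hx
    obtain ⟨q, hq1, hq2⟩ := exists_rat_btwn (show c + η / 2 < c + η by linarith)
    refine ⟨q, hq1, fun N => ?_⟩
    obtain ⟨n, hn1, hn2⟩ := hx N
    exact ⟨n, hn1, lt_trans hq2 hn2⟩
  · -- μ A = 1 leads to a contradiction with the maximal ergodic lemma
    exfalso
    set h : X → ℝ := fun y => g y - (c + η / 2) with hh
    have hmh : Measurable h := hm.sub measurable_const
    have hCh : ∀ x, |h x| ≤ C + |c + η / 2| := by
      intro x
      calc |h x| ≤ |g x| + |c + η / 2| := abs_sub _ _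
        _ ≤ C + |c + η / 2| := by linarith [hC x]
    have hfull : ∀ᵐ x ∂μ, ∃ n : ℕ, 0 < birkhoffSum f h (n + 1) x := by
      have hae : ∀ᵐ x ∂μ, x ∈ A := by
        rw [MeasureTheory.ae_iff]
        exact hAc0
      filter_upwards [hae] with x hx
      obtain ⟨q, hq, hfr⟩ := hx
      obtain ⟨n, hn1, hn2⟩ := hfr 1
      obtain ⟨m, rfl⟩ := Nat.exists_eq_succ_of_ne_zero (by omega : n ≠ 0)
      refine ⟨m, ?_⟩
      rw [birkhoffSum_sub_const]
      have hnpos : (0 : ℝ) < ((m + 1 : ℕ) : ℝ) := by positivity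
      rw [lt_div_iff₀ hnpos] at hn2
      have h2 : ((m + 1 : ℕ) : ℝ) * (c + η / 2) < ((m + 1 : ℕ) : ℝ) * (q : ℝ) :=
        mul_lt_mul_of_pos_left hq hnpos
      have h3 : ((m + 1 : ℕ) : ℝ) * (q : ℝ) = (q : ℝ) * ((m + 1 : ℕ) : ℝ) := mul_comm _ _
      linarith
    have h0 := maximal_erg μ f hf.toMeasurePreserving h hmh _ hCh hfull
    have : ∫ x, h x ∂μ = c - (c + η / 2) := by
      rw [hh]
      rw [integral_sub (integrable_of_bdd hm hC) (integrable_const _), integral_const]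
      simp [hc]
    rw [this] at h0
    linarith

end Aux


/-- Ergodic coherence: if `φ₁, …, φ_m` are bounded measurable functions that are
orthonormal in `L²(μ)` for an ergodic system `(X, μ, f)`, then for every
`η₀ > 0` and `ε ∈ (0,1)` there are `n₀` and a set `G` with `μ(G) > 1 − ε` such
that for all `x₀ ∈ G` and `n > n₀`, the columns `u_i` of the `n × m` matrix
`Θ_{k,i} = φ_i(f^{k-1}(x₀))/√n` satisfy `|⟨u_i, u_j⟩ − δ_{ij}| ≤ η₀` for all
`i ≠ j`. -/
theorem stmt13 {X : Type*} [MetricSpace X] [CompactSpace X] [MeasurableSpace X]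
    [BorelSpace X] (μ : Measure X) [IsProbabilityMeasure μ]
    (f : X → X) (hf : Ergodic f μ)
    (m : ℕ) (φ : Fin m → X → ℝ)
    (hmeas : ∀ i, Measurable (φ i))
    (hbdd : ∀ i, ∃ Cb : ℝ, ∀ x, |φ i x| ≤ Cb)
    (horth : ∀ i j, ∫ x, φ i x * φ j x ∂μ = if i = j then (1 : ℝ) else 0)
    (η₀ : ℝ) (hη : 0 < η₀) (ε : ℝ) (hε : ε ∈ Set.Ioo (0 : ℝ) 1) :
    ∃ (n₀ : ℕ) (G : Set X), MeasurableSet G ∧ 1 - ENNReal.ofReal ε < μ G ∧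
      ∀ x₀ ∈ G, ∀ n > n₀, ∀ i j : Fin m, i ≠ j →
        |(∑ k ∈ Finset.range n,
            (φ i (f^[k] x₀) / Real.sqrt n) * (φ j (f^[k] x₀) / Real.sqrt n)) -
          (if i = j then (1 : ℝ) else 0)| ≤ η₀ := by
  classical
  choose Cb hCb using hbdd
  have hgmeas : ∀ i j : Fin m, Measurable (fun x => φ i x * φ j x) :=
    fun i j => (hmeas i).mul (hmeas j)
  have hgbdd : ∀ i j : Fin m, ∀ x, |φ i x * φ j x| ≤ max (Cb i) 0 * max (Cb j) 0 := by
    intro i j x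
    rw [abs_mul]
    exact mul_le_mul ((hCb i x).trans (le_max_left _ _)) ((hCb j x).trans (le_max_left _ _))
      (abs_nonneg _) (le_max_right _ _)
  have hgint : ∀ i j : Fin m, i ≠ j → ∫ x, φ i x * φ j x ∂μ = 0 := by
    intro i j hij
    rw [horth i j, if_neg hij]
  -- for each off-diagonal pair, the upper and lower deviations are eventually controlled a.e.
  have hgood : ∀ᵐ x ∂μ, ∀ p : Fin m × Fin m, p.1 ≠ p.2 →
      ∃ N, ∀ n, N ≤ n → |birkhoffSum f (fun y => φ p.1 y * φ p.2 y) n x / n| ≤ η₀ := by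
    rw [ae_all_iff]
    intro p
    by_cases hp : p.1 = p.2
    · exact Filter.Eventually.of_forall fun x hne => absurd hp hne
    · set g : X → ℝ := fun y => φ p.1 y * φ p.2 y with hg
      have h1 : μ {x | ∀ N : ℕ, ∃ n, N ≤ n ∧ (∫ y, g y ∂μ) + η₀ < birkhoffSum f g n x / n} = 0 :=
        freq_null μ f hf g (hgmeas p.1 p.2) _ (hgbdd p.1 p.2) η₀ hη
      have h2 : μ {x | ∀ N : ℕ, ∃ n, N ≤ n ∧
          (∫ y, (-g) y ∂μ) + η₀ < birkhoffSum f (-g) n x / n} = 0 := by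
        refine freq_null μ f hf (-g) (hgmeas p.1 p.2).neg (max (Cb p.1) 0 * max (Cb p.2) 0)
          (fun x => ?_) η₀ hη
        simpa [hg, abs_mul] using hgbdd p.1 p.2 x
      have hint0 : ∫ y, g y ∂μ = 0 := hgint p.1 p.2 hp
      have hintneg : ∫ y, (-g) y ∂μ = 0 := by
        simp only [Pi.neg_apply]
        rw [integral_neg, hint0, neg_zero]
      rw [hint0] at h1
      rw [hintneg] at h2
      have hbirk_neg : ∀ n x, birkhoffSum f (-g) n x = -birkhoffSum f g n x := by
        intro n x
        simp [birkhoffSum]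
      filter_upwards [(MeasureTheory.ae_iff (p := fun x => ¬ x ∈
          {x | ∀ N : ℕ, ∃ n, N ≤ n ∧ 0 + η₀ < birkhoffSum f g n x / n})).mpr (by simpa using h1),
        (MeasureTheory.ae_iff (p := fun x => ¬ x ∈
          {x | ∀ N : ℕ, ∃ n, N ≤ n ∧ 0 + η₀ < birkhoffSum f (-g) n x / n})).mpr
          (by simpa using h2)] with x hx1 hx2 _
      simp only [Set.mem_setOf_eq, not_forall, not_exists, not_and, not_lt] at hx1 hx2
      obtain ⟨N1, hN1⟩ := hx1
      obtain ⟨N2, hN2⟩ := hx2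
      refine ⟨max N1 N2, fun n hn => ?_⟩
      have hu := hN1 n (le_trans (le_max_left _ _) hn)
      have hl := hN2 n (le_trans (le_max_right _ _) hn)
      rw [hbirk_neg, neg_div] at hl
      rw [zero_add] at hu hl
      rw [abs_le]
      constructor <;> linarith
  -- the good sets
  set Good : ℕ → Set X := fun N => ⋂ (n : ℕ) (i : Fin m) (j : Fin m),
    {x | N < n → i ≠ j →
      |(∑ k ∈ Finset.range n,
          (φ i (f^[k] x) / Real.sqrt n) * (φ j (f^[k] x) / Real.sqrt n)) -
        (if i = j then (1 : ℝ) else 0)| ≤ η₀} with hGood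
  have hGoodMeas : ∀ N, MeasurableSet (Good N) := by
    intro N
    refine MeasurableSet.iInter fun n => MeasurableSet.iInter fun i => MeasurableSet.iInter fun j => ?_
    by_cases h1 : N < n
    · by_cases h2 : i ≠ j
      · simp only [h1, h2, ne_eq, not_false_eq_true, forall_true_left, true_implies]
        apply measurableSet_le ?_ measurable_const
        apply Measurable.abs
        apply Measurable.sub ?_ measurable_const
        exact Finset.measurable_sum _ fun k _ =>
          (((hmeas i).comp (hf.measurable.iterate k)).div_const _).mul
            (((hmeas j).comp (hf.measurable.iterate k)).div_const _)
      · simp only [h2]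
        simp
    · simp only [h1]
      simp
  have hGoodMono : Monotone Good := by
    intro N N' hNN' x hx
    simp only [hGood, Set.mem_iInter, Set.mem_setOf_eq] at hx ⊢
    intro n i j hn hij
    exact hx n i j (lt_of_le_of_lt hNN' hn) hij
  -- a.e. every point is in some Good N
  have hcover : ∀ᵐ x ∂μ, x ∈ ⋃ N, Good N := by
    filter_upwards [hgood] with x hx
    have hx' : ∀ p : Fin m × Fin m, ∃ N, p.1 ≠ p.2 →
        ∀ n, N ≤ n → |birkhoffSum f (fun y => φ p.1 y * φ p.2 y) n x / n| ≤ η₀ := by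
      intro p
      by_cases hp : p.1 ≠ p.2
      · obtain ⟨N, hN⟩ := hx p hp
        exact ⟨N, fun _ => hN⟩
      · exact ⟨0, fun h => absurd h hp⟩
    choose Np hNp using hx'
    set Nstar := Finset.univ.sup Np with hNstar
    refine Set.mem_iUnion.mpr ⟨Nstar, ?_⟩
    simp only [hGood, Set.mem_iInter, Set.mem_setOf_eq]
    intro n i j hn hij
    have hnpos : 0 < n := lt_of_le_of_lt (Nat.zero_le _) hn
    have hbound := hNp ⟨i, j⟩ hij n
      (le_trans (le_trans (Finset.le_sup (Finset.mem_univ (⟨i, j⟩ : Fin m × Fin m))) (le_of_lt hn)) le_rfl)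
    rw [if_neg hij, sub_zero]
    have hsum : (∑ k ∈ Finset.range n,
        (φ i (f^[k] x) / Real.sqrt n) * (φ j (f^[k] x) / Real.sqrt n)) =
        birkhoffSum f (fun y => φ i y * φ j y) n x / n := by
      rw [birkhoffSum, Finset.sum_div]
      refine Finset.sum_congr rfl fun k _ => ?_
      rw [div_mul_div_comm, Real.mul_self_sqrt (Nat.cast_nonneg n)]
    rw [hsum]
    exact hbound
  -- the union has full measure
  have hU : μ (⋃ N, Good N) = 1 := by
    rw [← prob_compl_eq_zero_iff (MeasurableSet.iUnion hGoodMeas)]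
    rw [MeasureTheory.ae_iff] at hcover
    exact hcover
  have htend : Filter.Tendsto (fun N => μ (Good N)) Filter.atTop (nhds (μ (⋃ N, Good N))) :=
    tendsto_measure_iUnion_atTop hGoodMono
  rw [hU] at htend
  have hlt : (1 : ENNReal) - ENNReal.ofReal ε < 1 :=
    ENNReal.sub_lt_self ENNReal.one_ne_top one_ne_zero
      (by simp only [ne_eq, ENNReal.ofReal_eq_zero, not_le]; exact hε.1)
  have hev : ∀ᶠ N in Filter.atTop, 1 - ENNReal.ofReal ε < μ (Good N) :=
    htend.eventually (eventually_gt_nhds hlt)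
  obtain ⟨N, hN⟩ := hev.exists
  refine ⟨N, Good N, hGoodMeas N, hN, ?_⟩
  intro x hx n hn i j hij
  simp only [hGood, Set.mem_iInter, Set.mem_setOf_eq] at hx
  exact hx n i j hn hij
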